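/- arXiv:1011.2716 — 10 statements merged into one kernel-verified Lean document; each statement's English description precedes it below -/
import Mathlib

section
/- Define m : ℕ × ℕ → Multiset ℕ by m(x,y) = {x+y, max x y − min x y}. Then m is associative in the two-valued sense: for all x, y, z ∈ ℕ the 4-element multisets obtained as the union of m(x,w) over w ∈ m(y,z) and as the union of m(w,z) over w ∈ m(x,y) are equal. Moreover m(0,x) = {x,x} for all x, and 0 ∈ m(x,x) for all x. Hence (ℕ, m) is a two-valued group with unit 0 and inverse the identity map. -/
set_option linter.unreachableTactic false
set_option linter.unusedTactic false
set_option maxHeartbeats 4000000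

/-- Auxiliary: equality of two 4-element multisets via an explicit matching. -/
lemma quad_multiset_eq (a b c d a' b' c' d' : ℕ)
    (h : a = a' ∧ ((b=b'∧c=c'∧d=d') ∨ (b=b'∧c=d'∧d=c') ∨ (b=c'∧c=b'∧d=d') ∨
      (b=c'∧c=d'∧d=b') ∨ (b=d'∧c=b'∧d=c') ∨ (b=d'∧c=c'∧d=b'))) :
    ({a, b} : Multiset ℕ) + {c, d} = {a', b'} + {c', d'} := by
  obtain ⟨rfl, h⟩ := h
  rcases h with ⟨rfl,rfl,rfl⟩|⟨rfl,rfl,rfl⟩|⟨rfl,rfl,rfl⟩|⟨rfl,rfl,rfl⟩|⟨rfl,rfl,rfl⟩|⟨rfl,rfl,rfl⟩ <;>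
    · ext n
      simp only [Multiset.count_add, Multiset.insert_eq_cons, Multiset.count_cons,
        Multiset.count_singleton]
      try split_ifs <;> try omega
      try omega

/-- The two-valued addition on ℕ: `m (x, y) = {x + y, |x - y|}`. -/
def mTwo : ℕ × ℕ → Multiset ℕ := fun p => {p.1 + p.2, max p.1 p.2 - min p.1 p.2}

/-- `(ℕ, mTwo)` is a two-valued group with unit `0` and inverse the identity map:
`mTwo` is associative in the two-valued sense, `0` is a unit, and `0 ∈ mTwo (x, x)`. -/
theorem mTwo_two_valued_group :
    (∀ x y z : ℕ,
      (mTwo (y, z)).bind (fun w => mTwo (x, w)) =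
        (mTwo (x, y)).bind (fun w => mTwo (w, z))) ∧
    (∀ x : ℕ, mTwo (0, x) = {x, x}) ∧
    (∀ x : ℕ, 0 ∈ mTwo (x, x)) := by
  refine ⟨?_, ?_, ?_⟩
  · intro x y z
    simp only [mTwo, Multiset.insert_eq_cons, Multiset.cons_bind, Multiset.singleton_bind]
    rcases le_total y z with h1 | h1 <;> rcases le_total x y with h2 | h2 <;>
      rcases le_total x (y + z) with h3 | h3 <;> rcases le_total (x + y) z with h4 | h4 <;>
      (refine quad_multiset_eq _ _ _ _ _ _ _ _ ⟨by omega, ?_⟩) <;>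
      first
        | exact .inl ⟨by omega, by omega, by omega⟩
        | exact .inr (.inl ⟨by omega, by omega, by omega⟩)
        | exact .inr (.inr (.inl ⟨by omega, by omega, by omega⟩))
        | exact .inr (.inr (.inr (.inl ⟨by omega, by omega, by omega⟩)))
        | exact .inr (.inr (.inr (.inr (.inl ⟨by omega, by omega, by omega⟩))))
        | exact .inr (.inr (.inr (.inr (.inr ⟨by omega, by omega, by omega⟩))))
  · intro x
    simp [mTwo]
  · intro x
    simp [mTwo]
end

section
/- The two-valued group p₂ on ℂ is associative: for all x, y, z ∈ ℂ, the set {w ∈ ℂ : ∃ t, p₂(t,y,z) = 0 ∧ p₂(w,x,t) = 0} equals the set {w ∈ ℂ : ∃ t, p₂(t,x,y) = 0 ∧ p₂(w,t,z) = 0}, where p₂(z,x,y) = (x+y+z)² − 4(xy+yz+zx). -/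
/-- The polynomial whose roots in `z` give the two-valued group `p₂` on `ℂ`. -/
def pTwo (z x y : ℂ) : ℂ := (x + y + z)^2 - 4*(x*y + y*z + z*x)

lemma pTwo_sq (w p q : ℂ) :
    pTwo w (p^2) (q^2) = 0 ↔ w = (p+q)^2 ∨ w = (p-q)^2 := by
  have h : pTwo w (p^2) (q^2) = (w - (p+q)^2) * (w - (p-q)^2) := by
    unfold pTwo; ring
  rw [h, mul_eq_zero, sub_eq_zero, sub_eq_zero]

/-- The two-valued group `p₂` on `ℂ` is associative: the set of values of `x ∗₂ (y ∗₂ z)`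
coincides with the set of values of `(x ∗₂ y) ∗₂ z`. -/
theorem pTwo_assoc (x y z : ℂ) :
    {w : ℂ | ∃ t : ℂ, pTwo t y z = 0 ∧ pTwo w x t = 0} =
      {w : ℂ | ∃ t : ℂ, pTwo t x y = 0 ∧ pTwo w t z = 0} := by
  obtain ⟨a, ha⟩ := IsAlgClosed.exists_pow_nat_eq x (n := 2) two_pos
  obtain ⟨b, hb⟩ := IsAlgClosed.exists_pow_nat_eq y (n := 2) two_pos
  obtain ⟨c, hc⟩ := IsAlgClosed.exists_pow_nat_eq z (n := 2) two_pos
  subst ha hb hc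
  ext w
  simp only [Set.mem_setOf_eq]
  constructor
  · rintro ⟨t, ht, hw⟩
    rcases (pTwo_sq t b c).mp ht with rfl | rfl
    · rcases (pTwo_sq w a (b+c)).mp hw with rfl | rfl
      · exact ⟨(a+b)^2, (pTwo_sq _ a b).mpr (Or.inl rfl),
          (pTwo_sq _ (a+b) c).mpr (Or.inl (by ring))⟩
      · exact ⟨(a-b)^2, (pTwo_sq _ a b).mpr (Or.inr rfl),
          (pTwo_sq _ (a-b) c).mpr (Or.inr (by ring))⟩
    · rcases (pTwo_sq w a (b-c)).mp hw with rfl | rfl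
      · exact ⟨(a+b)^2, (pTwo_sq _ a b).mpr (Or.inl rfl),
          (pTwo_sq _ (a+b) c).mpr (Or.inr (by ring))⟩
      · exact ⟨(a-b)^2, (pTwo_sq _ a b).mpr (Or.inr rfl),
          (pTwo_sq _ (a-b) c).mpr (Or.inl (by ring))⟩
  · rintro ⟨t, ht, hw⟩
    rcases (pTwo_sq t a b).mp ht with rfl | rfl
    · rcases (pTwo_sq w (a+b) c).mp hw with rfl | rfl
      · exact ⟨(b+c)^2, (pTwo_sq _ b c).mpr (Or.inl rfl),
          (pTwo_sq _ a (b+c)).mpr (Or.inl (by ring))⟩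
      · exact ⟨(b-c)^2, (pTwo_sq _ b c).mpr (Or.inr rfl),
          (pTwo_sq _ a (b-c)).mpr (Or.inl (by ring))⟩
    · rcases (pTwo_sq w (a-b) c).mp hw with rfl | rfl
      · exact ⟨(b-c)^2, (pTwo_sq _ b c).mpr (Or.inr rfl),
          (pTwo_sq _ a (b-c)).mpr (Or.inr (by ring))⟩
      · exact ⟨(b+c)^2, (pTwo_sq _ b c).mpr (Or.inl rfl),
          (pTwo_sq _ a (b+c)).mpr (Or.inr (by ring))⟩
end

section
/- Let g₂, g₃ ∈ ℂ and let s₁, t₁, s₂, t₂ ∈ ℂ satisfy t₁² = 4s₁³ − g₂s₁ − g₃, t₂² = 4s₂³ − g₂s₂ − g₃ and s₁ ≠ s₂. Define z₊ = −s₁ − s₂ + ((t₁−t₂)/(2(s₁−s₂)))² and z₋ = −s₁ − s₂ + ((t₁+t₂)/(2(s₁−s₂)))². Then: (i) 2(s₁−s₂)²·(z₊ + z₋) = 4s₁s₂(s₁+s₂) − g₂(s₁+s₂) − 2g₃, and (ii) (s₁−s₂)²·(z₊·z₋) = (s₁s₂ + g₂/4)² + g₃(s₁+s₂). Consequently the unordered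 pair {z₊, z₋} is determined algebraically (symmetrically) by (s₁, s₂) alone, which is the multiplication law of the two-valued coset group on the elliptic curve t² = 4s³ − g₂s − g₃ modulo the involution (s,t) ↦ (s,−t). -/
/-- The multiplication law of the two-valued coset group on the elliptic curve
`t² = 4s³ − g₂s − g₃` modulo the involution `(s,t) ↦ (s,−t)`: the elementary symmetric
functions of the two product values `z₊, z₋` are expressed algebraically in `(s₁, s₂)`. -/
theorem elliptic_coset_two_valued_law (g₂ g₃ s₁ t₁ s₂ t₂ : ℂ)
    (h₁ : t₁^2 = 4*s₁^3 - g₂*s₁ - g₃)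
    (h₂ : t₂^2 = 4*s₂^3 - g₂*s₂ - g₃)
    (hne : s₁ ≠ s₂)
    (zp zm : ℂ)
    (hzp : zp = -s₁ - s₂ + ((t₁ - t₂)/(2*(s₁ - s₂)))^2)
    (hzm : zm = -s₁ - s₂ + ((t₁ + t₂)/(2*(s₁ - s₂)))^2) :
    2*(s₁ - s₂)^2*(zp + zm) = 4*s₁*s₂*(s₁ + s₂) - g₂*(s₁ + s₂) - 2*g₃ ∧
    (s₁ - s₂)^2*(zp*zm) = (s₁*s₂ + g₂/4)^2 + g₃*(s₁ + s₂) := by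
  have hd : s₁ - s₂ ≠ 0 := sub_ne_zero.mpr hne
  have e12 : t₁^2 - t₂^2 = (s₁-s₂)*(4*(s₁^2+s₁*s₂+s₂^2) - g₂) := by linear_combination h₁ - h₂
  have hsum : (s₁ - s₂)^2*(zp + zm) =
      -2*(s₁+s₂)*(s₁-s₂)^2 + (t₁^2 + t₂^2)/2 := by
    subst hzp hzm
    field_simp
    ring
  have hprod : (s₁ - s₂)^2*(zp*zm) =
      (s₁+s₂)^2*(s₁-s₂)^2 - (s₁+s₂)*(t₁^2+t₂^2)/2
        + (4*(s₁^2+s₁*s₂+s₂^2)-g₂)^2/16 := by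
    subst hzp hzm
    field_simp
    linear_combination (16*(t₁^2 - t₂^2 + (s₁-s₂)*(4*(s₁^2+s₁*s₂+s₂^2) - g₂))) * e12
  constructor
  · rw [show 2*(s₁ - s₂)^2*(zp + zm) = 2*((s₁ - s₂)^2*(zp + zm)) by ring, hsum]
    linear_combination h₁ + h₂
  · rw [hprod]
    linear_combination (-(s₁+s₂)/2) * h₁ + (-(s₁+s₂)/2) * h₂
end

section
/- Let λ, u, v ∈ ℂ with 1 − λu ≠ 0 and 1 − λv ≠ 0, and let w = u + v − λuv (so that 1 − λw = (1 − λu)(1 − λv) ≠ 0). Define x = −u²/(1 − λu), y = −v²/(1 − λv), z₁ = −w²/(1 − λw), and z₂ = −(u − v)²/((1 − λu)(1 − λv)). Then z₁ + z₂ = 2(x + y) − λ²xy and z₁·z₂ = (x − y)², i.e. z₁ and z₂ are the two roots of Z² − (2(x+y) − λ²xy)Z + (x − y)² = 0. -/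
/-- The one-parameter 2-groupoid deformation of the elementary two-valued group `p₂`:
with group law `A(u,v) = u + v − λuv` and involution `I(u) = −u/(1−λu)`, setting
`x = u·I(u)`, `y = v·I(v)`, the two products `z₁ = w·I(w)` (for `w = A(u,v)`) and `z₂`
are the roots of `Z² − (2(x+y) − λ²xy)Z + (x−y)² = 0`. -/
theorem groupoid_deformation_p2 (lam u v : ℂ)
    (hu : 1 - lam*u ≠ 0) (hv : 1 - lam*v ≠ 0)
    (w : ℂ) (hw : w = u + v - lam*u*v)
    (x y z₁ z₂ : ℂ)
    (hx : x = -u^2/(1 - lam*u))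
    (hy : y = -v^2/(1 - lam*v))
    (hz₁ : z₁ = -w^2/(1 - lam*w))
    (hz₂ : z₂ = -(u - v)^2/((1 - lam*u)*(1 - lam*v))) :
    1 - lam*w = (1 - lam*u)*(1 - lam*v) ∧
    z₁ + z₂ = 2*(x + y) - lam^2*x*y ∧
    z₁*z₂ = (x - y)^2 := by
  have h1 : 1 - lam*w = (1 - lam*u)*(1 - lam*v) := by rw [hw]; ring
  have hu' : 1 - u*lam ≠ 0 := by rwa [mul_comm]
  have hv' : 1 - v*lam ≠ 0 := by rwa [mul_comm]
  refine ⟨h1, ?_, ?_⟩ <;>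
    rw [hx, hy, hz₁, hz₂, h1, hw] <;>
    field_simp <;> ring
end

section
/- Let u₁, u₂, v₁, v₂ ∈ ℂ and set x₁ = u₁², x₂ = u₁u₂, x₃ = u₂², y₁ = v₁², y₂ = v₁v₂, y₃ = v₂², and X₂ = (u₁+v₁)², Y₂ = (u₁−v₁)², X₄ = (u₁+v₁)(u₂+v₂), Y₄ = (u₁−v₁)(u₂−v₂), X₆ = (u₂+v₂)², Y₆ = (u₂−v₂)². Then: X₂ + Y₂ = 2(x₁+y₁) and X₂Y₂ = (x₁−y₁)²; X₄ + Y₄ = 2(x₂+y₂) and X₄Y₄ = (x₁−y₁)(x₃−y₃); X₆ + Y₆ = 2(x₃+y₃) and X₆Y₆ = (x₃−y₃)²; moreover X₂X₆ = X₄² and Y₂Y₆ = Y₄². Hence each of the pairs (X₂,Y₂), (X₄,Y₄), (X₆,Y₆) is the root pair of a quadratic equation whose coefficients are polynomials in (x₁,x₂,x₃,y₁,y₂,y₃), and the quadric constraints select the unique compatible pair of triples, giving the elementary two-valued group law on ℂ²/±. -/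
/-- The elementary two-valued group law on `ℂ²/±` transported through the embedding
`π([u]) = (u₁², u₁u₂, u₂²)` onto the quadric `x₁x₃ = x₂²`: each pair `(X₂,Y₂)`,
`(X₄,Y₄)`, `(X₆,Y₆)` has elementary symmetric functions polynomial in the coordinates
`(x₁,x₂,x₃,y₁,y₂,y₃)`, and satisfies the quadric constraints. -/
theorem elementary_two_valued_group_law (u₁ u₂ v₁ v₂ : ℂ)
    (x₁ x₂ x₃ y₁ y₂ y₃ X₂ Y₂ X₄ Y₄ X₆ Y₆ : ℂ)
    (hx₁ : x₁ = u₁^2) (hx₂ : x₂ = u₁*u₂) (hx₃ : x₃ = u₂^2)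
    (hy₁ : y₁ = v₁^2) (hy₂ : y₂ = v₁*v₂) (hy₃ : y₃ = v₂^2)
    (hX₂ : X₂ = (u₁ + v₁)^2) (hY₂ : Y₂ = (u₁ - v₁)^2)
    (hX₄ : X₄ = (u₁ + v₁)*(u₂ + v₂)) (hY₄ : Y₄ = (u₁ - v₁)*(u₂ - v₂))
    (hX₆ : X₆ = (u₂ + v₂)^2) (hY₆ : Y₆ = (u₂ - v₂)^2) :
    X₂ + Y₂ = 2*(x₁ + y₁) ∧ X₂*Y₂ = (x₁ - y₁)^2 ∧
    X₄ + Y₄ = 2*(x₂ + y₂) ∧ X₄*Y₄ = (x₁ - y₁)*(x₃ - y₃) ∧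
    X₆ + Y₆ = 2*(x₃ + y₃) ∧ X₆*Y₆ = (x₃ - y₃)^2 ∧
    X₂*X₆ = X₄^2 ∧ Y₂*Y₆ = Y₄^2 := by
  subst_vars; refine ⟨by ring, by ring, by ring, by ring, by ring, by ring, by ring, by ring⟩
end

section
/- For all u₁, u₃ ∈ ℂ, setting X̂₂ = −u₁², X̂₄ = 2u₁u₃ + u₁⁴/3, and X̂₆ = (u₃ − u₁³/3)², the quartic relation X̂₄² − 2X̂₂²X̂₄ + 4X̂₂X̂₆ + X̂₂⁴ = 0 holds. Hence the image of the map π_K lies on a quartic surface in ℂ³, the rational limit of the Kummer surface. -/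
/-- The image of the map `π_K(u₁,u₃) = ((u₃ − u₁³/3)², 2u₁u₃ + u₁⁴/3, −u₁²)` lies on a
quartic surface in `ℂ³`: the rational limit of the Kummer surface. -/
theorem rational_kummer_quartic (u₁ u₃ : ℂ)
    (X₂ X₄ X₆ : ℂ)
    (hX₂ : X₂ = -u₁^2)
    (hX₄ : X₄ = 2*u₁*u₃ + u₁^4/3)
    (hX₆ : X₆ = (u₃ - u₁^3/3)^2) :
    X₄^2 - 2*X₂^2*X₄ + 4*X₂*X₆ + X₂^4 = 0 := by
  subst hX₂ hX₄ hX₆; ring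
end

section
/- Let π_K : ℂ² → ℂ³ be defined by π_K(u₁,u₃) = ((u₃ − u₁³/3)², 2u₁u₃ + u₁⁴/3, −u₁²). Then for all u, v ∈ ℂ², π_K(u) = π_K(v) if and only if v = u or v = −u. In other words, the nonempty fibres of π_K are exactly the two-element orbits {u, −u} (one-element when u = 0), so π_K induces an embedding of ℂ²/± into ℂ³. -/
lemma sq_eq_sq_complex {x y : ℂ} (h : x^2 = y^2) : x = y ∨ x = -y := by
  have : (x - y) * (x + y) = 0 := by linear_combination h
  rcases mul_eq_zero.mp this with h' | h'
  · left; exact sub_eq_zero.mp h'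
  · right; linear_combination h'

/-- The embedding of `ℂ²/±` into `ℂ³` induced by the rational limit of the Kummer
surface. -/
noncomputable def piK : ℂ × ℂ → ℂ × ℂ × ℂ :=
  fun u => ((u.2 - u.1^3/3)^2, 2*u.1*u.2 + u.1^4/3, -u.1^2)

/-- The nonempty fibres of `π_K` are exactly the orbits `{u, −u}` of the involution
`u ↦ −u`, so `π_K` induces an embedding of `ℂ²/±` into `ℂ³`. -/
theorem piK_fibres : ∀ u v : ℂ × ℂ, piK u = piK v ↔ (v = u ∨ v = -u) := by
  rintro ⟨a, b⟩ ⟨c, d⟩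
  constructor
  · intro h
    simp only [piK, Prod.mk.injEq] at h
    obtain ⟨h1, h2, h3⟩ := h
    have hc : c = a ∨ c = -a := sq_eq_sq_complex (by linear_combination h3)
    rcases hc with hc | hc
    · subst hc
      have : 2 * c * (b - d) = 0 := by linear_combination h2
      rcases mul_eq_zero.mp this with h' | h'
      · have hc0 : c = 0 := by
          rcases mul_eq_zero.mp h' with h'' | h''
          · exact absurd h'' two_ne_zero
          · exact h''
        subst hc0
        have hbd : b = d ∨ b = -d := sq_eq_sq_complex (by linear_combination h1)
        rcases hbd with hbd | hbd
        · left; simp [Prod.ext_iff, hbd]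
        · right; simp [Prod.ext_iff]; linear_combination hbd
      · left
        have : b = d := by linear_combination h'
        simp [Prod.ext_iff, this]
    · subst hc
      have : 2 * a * (b + d) = 0 := by linear_combination h2
      rcases mul_eq_zero.mp this with h' | h'
      · have ha0 : a = 0 := by
          rcases mul_eq_zero.mp h' with h'' | h''
          · exact absurd h'' two_ne_zero
          · exact h''
        subst ha0
        have hbd : b = d ∨ b = -d := sq_eq_sq_complex (by linear_combination h1)
        rcases hbd with hbd | hbd
        · left; simp [Prod.ext_iff, hbd]
        · right; simp [Prod.ext_iff]; linear_combination hbd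
      · right
        have : d = -b := by linear_combination h'
        simp [Prod.ext_iff, this]
  · rintro (h | h) <;> rw [h]
    simp only [piK, Prod.mk.injEq, Prod.fst_neg, Prod.snd_neg]
    exact ⟨by ring, by ring, by ring⟩
end

section
/- Let u = (u₁,u₃), v = (v₁,v₃) ∈ ℂ² and set x₂ = 2u₁u₃ + u₁⁴/3, x₃ = −u₁², y₂ = 2v₁v₃ + v₁⁴/3, y₃ = −v₁² (the second and third coordinates of π_K(u) and π_K(v)). Define X̂₂ = −(u₁+v₁)², Ŷ₂ = −(u₁−v₁)², X̂₄ = 2(u₁+v₁)(u₃+v₃) + (1/3)(u₁+v₁)⁴, Ŷ₄ = 2(u₁−v₁)(u₃−v₃) + (1/3)(u₁−v₁)⁴. Then X̂₂ + Ŷ₂ = 2(x₃ + y₃), X̂₂·Ŷ₂ = (x₃ − y₃)², and X̂₄ + Ŷ₄ = 2(x₂ + y₂ + 2x₃y₃). In particular the pair (X̂₂, Ŷ₂) is the root pair of the quadratic Z² − 2(x₃+y₃)Z + (x₃−y₃)² = 0. -/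
/-- The rational Kummer two-valued group: the elementary symmetric functions of the
pairs `(X̂₂, Ŷ₂)` and `(X̂₄, Ŷ₄)`, coming from `π_K(u+v)` and `π_K(u−v)`, are
polynomial in the coordinates `x₂, x₃, y₂, y₃` of `π_K(u)` and `π_K(v)`. -/
theorem rational_kummer_law (u₁ u₃ v₁ v₃ : ℂ)
    (x₂ x₃ y₂ y₃ X₂ Y₂ X₄ Y₄ : ℂ)
    (hx₂ : x₂ = 2*u₁*u₃ + u₁^4/3) (hx₃ : x₃ = -u₁^2)
    (hy₂ : y₂ = 2*v₁*v₃ + v₁^4/3) (hy₃ : y₃ = -v₁^2)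
    (hX₂ : X₂ = -(u₁ + v₁)^2) (hY₂ : Y₂ = -(u₁ - v₁)^2)
    (hX₄ : X₄ = 2*(u₁ + v₁)*(u₃ + v₃) + (1/3)*(u₁ + v₁)^4)
    (hY₄ : Y₄ = 2*(u₁ - v₁)*(u₃ - v₃) + (1/3)*(u₁ - v₁)^4) :
    X₂ + Y₂ = 2*(x₃ + y₃) ∧ X₂*Y₂ = (x₃ - y₃)^2 ∧
    X₄ + Y₄ = 2*(x₂ + y₂ + 2*x₃*y₃) ∧
    (∀ Z : ℂ, Z^2 - 2*(x₃ + y₃)*Z + (x₃ - y₃)^2 = 0 ↔ (Z = X₂ ∨ Z = Y₂)) := by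
  subst hx₂ hx₃ hy₂ hy₃ hX₂ hY₂ hX₄ hY₄
  refine ⟨by ring, by ring, by ring, fun Z => ?_⟩
  constructor
  · intro h
    have : (Z - -(u₁ + v₁)^2) * (Z - -(u₁ - v₁)^2) = 0 := by linear_combination h
    rcases mul_eq_zero.mp this with h | h
    · exact Or.inl (sub_eq_zero.mp h)
    · exact Or.inr (sub_eq_zero.mp h)
  · rintro (rfl | rfl) <;> ring
end

section
/- Let q₁, q₂ be quadratic forms on ℂ⁶ with symmetric matrix representatives A, B, and assume the pencil is generic in the sense that the polynomial λ ↦ det(A + λB) has degree 6 and six distinct complex roots, and det A ≠ 0. Then every linear subspace W ⊆ ℂ⁶ on which both q₁ and q₂ vanish identically has dimension at most 2. Equivalently, the maximal linear subspaces of the smooth intersection X of the two quadrics {q₁ = 0} and {q₂ = 0} in ℂP⁵ are one-dimensional (lines). -/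
open Polynomial Matrix Module

lemma polarize {A : Matrix (Fin 6) (Fin 6) ℂ} (hA : A.IsSymm) {x y : Fin 6 → ℂ}
    (hx : x ⬝ᵥ (A *ᵥ x) = 0) (hy : y ⬝ᵥ (A *ᵥ y) = 0)
    (hxy : (x + y) ⬝ᵥ (A *ᵥ (x + y)) = 0) : x ⬝ᵥ (A *ᵥ y) = 0 := by
  have hsym : y ⬝ᵥ (A *ᵥ x) = x ⬝ᵥ (A *ᵥ y) := by
    rw [Matrix.dotProduct_mulVec, ← Matrix.mulVec_transpose, hA.eq, dotProduct_comm]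
  have h2 : (2 : ℂ) * (x ⬝ᵥ (A *ᵥ y)) = 0 := by
    have h := hxy
    rw [Matrix.mulVec_add, add_dotProduct, dotProduct_add,
      dotProduct_add, hx, hy, hsym] at h
    linear_combination h
  simpa using mul_eq_zero.mp h2 |>.resolve_left (by norm_num)

lemma symdot {A : Matrix (Fin 6) (Fin 6) ℂ} (hA : A.IsSymm) (x y : Fin 6 → ℂ) :
    y ⬝ᵥ (A *ᵥ x) = x ⬝ᵥ (A *ᵥ y) := by
  rw [Matrix.dotProduct_mulVec, ← Matrix.mulVec_transpose, hA.eq, dotProduct_comm]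

lemma sum_dotProduct' {ι : Type*} (s : Finset ι) (f : ι → Fin 6 → ℂ) (y : Fin 6 → ℂ) :
    (∑ i ∈ s, f i) ⬝ᵥ y = ∑ i ∈ s, f i ⬝ᵥ y := by
  induction s using Finset.cons_induction with
  | empty => simp
  | cons a s ha ih => rw [Finset.sum_cons, Finset.sum_cons, add_dotProduct, ih]

lemma ker_rank_three {M : Matrix (Fin 3) (Fin 6) ℂ}
    (h : LinearIndependent ℂ (fun i => M i)) :
    finrank ℂ (LinearMap.ker M.mulVecLin) = 3 := by
  have hr : M.rank = 3 := by
    rw [← Matrix.rank_transpose, Matrix.rank, Matrix.range_mulVecLin]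
    change finrank ℂ (Submodule.span ℂ (Set.range fun i => M i)) = 3
    rw [finrank_span_eq_card h]
    simp
  have hrn := LinearMap.finrank_range_add_finrank_ker M.mulVecLin
  rw [Matrix.rank] at hr
  simp only [Module.finrank_pi, Fintype.card_fin] at hrn
  omega

lemma eval_pencil_det (A B : Matrix (Fin 6) (Fin 6) ℂ) (t : ℂ) :
    (Matrix.det (A.map (C : ℂ → ℂ[X]) + (X : ℂ[X]) • B.map (C : ℂ → ℂ[X]))).eval t
      = (A + t • B).det := by
  have h := RingHom.map_det (evalRingHom t)
    (A.map (C : ℂ → ℂ[X]) + (X : ℂ[X]) • B.map (C : ℂ → ℂ[X]))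
  rw [show eval t (A.map (C : ℂ → ℂ[X]) + (X : ℂ[X]) • B.map (C : ℂ → ℂ[X])).det
      = (evalRingHom t) (A.map (C : ℂ → ℂ[X]) + (X : ℂ[X]) • B.map (C : ℂ → ℂ[X])).det from rfl, h]
  congr 1
  ext i j
  simp only [RingHom.mapMatrix_apply, Matrix.map_apply, Matrix.add_apply, Matrix.smul_apply,
    smul_eq_mul, coe_evalRingHom, eval_add, eval_mul, eval_C, eval_X]

/-- For a generic pencil of quadrics on `ℂ⁶` (the polynomial `λ ↦ det(A + λB)` has degree
6 with six distinct roots, and `det A ≠ 0`), every common totally isotropic subspace has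
dimension at most 2. Equivalently, the maximal linear subspaces of the smooth intersection
of the two quadrics in `ℂP⁵` are lines. -/
theorem generic_pencil_isotropic_dim_le_two
    (A B : Matrix (Fin 6) (Fin 6) ℂ) (hA : A.IsSymm) (hB : B.IsSymm)
    (q₁ q₂ : (Fin 6 → ℂ) → ℂ)
    (hq₁ : ∀ x, q₁ x = x ⬝ᵥ (A *ᵥ x))
    (hq₂ : ∀ x, q₂ x = x ⬝ᵥ (B *ᵥ x))
    (hdeg : (Matrix.det (A.map (C : ℂ → ℂ[X]) + (X : ℂ[X]) • B.map (C : ℂ → ℂ[X]))).degree = 6)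
    (hroots : (Matrix.det (A.map (C : ℂ → ℂ[X]) + (X : ℂ[X]) • B.map (C : ℂ → ℂ[X]))).roots.toFinset.card = 6)
    (hdetA : A.det ≠ 0) :
    ∀ W : Submodule ℂ (Fin 6 → ℂ),
      (∀ x ∈ W, q₁ x = 0 ∧ q₂ x = 0) → Module.finrank ℂ W ≤ 2 := by
  intro W hW
  by_contra hcon
  push_neg at hcon
  have hqA : ∀ x ∈ W, x ⬝ᵥ (A *ᵥ x) = 0 := fun x hx => (hq₁ x).symm.trans (hW x hx).1
  have hqB : ∀ x ∈ W, x ⬝ᵥ (B *ᵥ x) = 0 := fun x hx => (hq₂ x).symm.trans (hW x hx).2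
  have hbA : ∀ x ∈ W, ∀ y ∈ W, x ⬝ᵥ (A *ᵥ y) = 0 := fun x hx y hy =>
    polarize hA (hqA x hx) (hqA y hy) (hqA _ (W.add_mem hx hy))
  have hbB : ∀ x ∈ W, ∀ y ∈ W, x ⬝ᵥ (B *ᵥ y) = 0 := fun x hx y hy =>
    polarize hB (hqB x hx) (hqB y hy) (hqB _ (W.add_mem hx hy))
  set p := Matrix.det (A.map (C : ℂ → ℂ[X]) + (X : ℂ[X]) • B.map (C : ℂ → ℂ[X])) with hp
  have hp0 : p ≠ 0 := fun h => by simp [h] at hdeg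
  set s := p.roots.toFinset with hs
  let e : s ≃ Fin 6 := s.equivFinOfCardEq hroots
  set lam : Fin 6 → ℂ := fun k => ((e.symm k : s) : ℂ) with hlam
  have hlaminj : Function.Injective lam := fun a b hab => e.symm.injective (Subtype.ext hab)
  have hlamroot : ∀ k, (A + lam k • B).det = 0 := by
    intro k
    have hmem : lam k ∈ p.roots := Multiset.mem_toFinset.mp (e.symm k).2
    have h2 : p.eval (lam k) = 0 := (Polynomial.mem_roots'.mp hmem).2
    rw [hp, eval_pencil_det] at h2
    exact h2
  have hlamne : ∀ k, lam k ≠ 0 := by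
    intro k h0
    apply hdetA
    have h := hlamroot k
    rw [h0] at h
    simpa using h
  have hker : ∀ k, ∃ u : Fin 6 → ℂ, u ≠ 0 ∧ (A + lam k • B) *ᵥ u = 0 := fun k =>
    (Matrix.exists_mulVec_eq_zero_iff).mpr (hlamroot k)
  choose v hv0 hvk using hker
  have hAv : ∀ k, A *ᵥ v k = -(lam k • (B *ᵥ v k)) := by
    intro k
    have h := hvk k
    rw [Matrix.add_mulVec, Matrix.smul_mulVec] at h
    exact eq_neg_of_add_eq_zero_left h
  have hAu : IsUnit A.det := isUnit_iff_ne_zero.mpr hdetA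
  have hAinvmul : A⁻¹ * A = 1 := Matrix.nonsing_inv_mul A hAu
  have hAmulinv : A * A⁻¹ = 1 := Matrix.mul_nonsing_inv A hAu
  have hAinj : Function.Injective (fun x => A *ᵥ x) := by
    intro x y hxy
    have := congrArg (fun z => A⁻¹ *ᵥ z) hxy
    simpa [Matrix.mulVec_mulVec, hAinvmul] using this
  set mu : Fin 6 → ℂ := fun k => -(lam k)⁻¹ with hmu
  have hmuinj : Function.Injective mu := by
    intro a b hab
    apply hlaminj
    exact inv_injective (neg_injective hab)
  have heig : ∀ k, (A⁻¹ * B) *ᵥ v k = mu k • v k := by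
    intro k
    have h := congrArg (fun z => A⁻¹ *ᵥ z) (hAv k)
    simp only [Matrix.mulVec_mulVec, Matrix.mulVec_neg, Matrix.mulVec_smul] at h
    rw [hAinvmul, Matrix.one_mulVec] at h
    have h2 : lam k • ((A⁻¹ * B) *ᵥ v k) = -(v k) := by
      have := congrArg Neg.neg h
      rw [neg_neg] at this
      exact this.symm
    show (A⁻¹ * B) *ᵥ v k = (-(lam k)⁻¹) • v k
    calc (A⁻¹ * B) *ᵥ v k = (lam k)⁻¹ • (lam k • ((A⁻¹ * B) *ᵥ v k)) := by
          rw [smul_smul, inv_mul_cancel₀ (hlamne k), one_smul]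
    _ = (lam k)⁻¹ • (-(v k)) := by rw [h2]
    _ = (-(lam k)⁻¹) • v k := by rw [smul_neg, neg_smul]
  have hvind : LinearIndependent ℂ v := by
    apply Module.End.eigenvectors_linearIndependent' ((A⁻¹ * B).mulVecLin) mu hmuinj
    intro k
    exact ⟨Module.End.mem_eigenspace_iff.mpr ((Matrix.mulVecLin_apply _ _).trans (heig k)), hv0 k⟩
  have hcard : Fintype.card (Fin 6) = finrank ℂ (Fin 6 → ℂ) := by simp
  let bas : Basis (Fin 6) ℂ (Fin 6 → ℂ) := basisOfLinearIndependentOfCardEqFinrank hvind hcard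
  have hbas : ⇑bas = v := coe_basisOfLinearIndependentOfCardEqFinrank hvind hcard
  have horthB : ∀ j k, j ≠ k → v j ⬝ᵥ (B *ᵥ v k) = 0 := by
    intro j k hjk
    have h1 : v j ⬝ᵥ (A *ᵥ v k) = -(lam k * (v j ⬝ᵥ (B *ᵥ v k))) := by
      rw [hAv k, dotProduct_neg, dotProduct_smul, smul_eq_mul]
    have h2 : v j ⬝ᵥ (A *ᵥ v k) = -(lam j * (v j ⬝ᵥ (B *ᵥ v k))) := by
      rw [symdot hA, hAv j, dotProduct_neg, dotProduct_smul, smul_eq_mul,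
        neg_inj, symdot hB]
    have h3 : (lam k - lam j) * (v j ⬝ᵥ (B *ᵥ v k)) = 0 := by
      have h4 := h1.symm.trans h2
      linear_combination -h4
    rcases mul_eq_zero.mp h3 with h | h
    · exact absurd (sub_eq_zero.mp h) (fun hh => hjk (hlaminj hh.symm))
    · exact h
  have horthA : ∀ j k, j ≠ k → v j ⬝ᵥ (A *ᵥ v k) = 0 := by
    intro j k hjk
    rw [hAv k, dotProduct_neg, dotProduct_smul, smul_eq_mul, horthB j k hjk,
      mul_zero, neg_zero]
  set d : Fin 6 → ℂ := fun k => v k ⬝ᵥ (A *ᵥ v k) with hd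
  set ee : Fin 6 → ℂ := fun k => v k ⬝ᵥ (B *ᵥ v k) with hee
  have hde : ∀ k, d k = -(lam k * ee k) := by
    intro k
    show v k ⬝ᵥ (A *ᵥ v k) = -(lam k * (v k ⬝ᵥ (B *ᵥ v k)))
    rw [hAv k, dotProduct_neg, dotProduct_smul, smul_eq_mul]
  have hdne : ∀ k, d k ≠ 0 := by
    intro k hk
    have hall : ∀ x : Fin 6 → ℂ, x ⬝ᵥ (A *ᵥ v k) = 0 := by
      intro x
      have hx : x ∈ Submodule.span ℂ (Set.range v) := by
        rw [← hbas, bas.span_eq]; trivial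
      induction hx using Submodule.span_induction with
      | mem z hz =>
        obtain ⟨j, rfl⟩ := hz
        by_cases hjk : j = k
        · subst hjk; exact hk
        · exact horthA j k hjk
      | zero => simp
      | add a b _ _ ha hb => rw [add_dotProduct, ha, hb, add_zero]
      | smul c a _ ha => rw [smul_dotProduct, ha, smul_zero]
    have hAvk : A *ᵥ v k = 0 := by
      funext i
      have := hall (Pi.single i 1)
      rwa [single_dotProduct, one_mul] at this
    exact hv0 k (hAinj (show A *ᵥ v k = A *ᵥ 0 by simp [hAvk]))
  have hene : ∀ k, ee k ≠ 0 := by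
    intro k hk
    apply hdne k
    rw [hde k, hk, mul_zero, neg_zero]
  have hdetB : B.det ≠ 0 := by
    intro hdB
    obtain ⟨u, hu0, hBu⟩ := (Matrix.exists_mulVec_eq_zero_iff).mpr hdB
    have hrep := bas.sum_repr u
    have hcoef : ∀ k, bas.repr u k = 0 := by
      intro k
      have h0 : u ⬝ᵥ (B *ᵥ v k) = 0 := by
        rw [symdot hB, hBu, dotProduct_zero]
      rw [← hrep, sum_dotProduct'] at h0
      simp only [smul_dotProduct, smul_eq_mul, hbas] at h0
      rw [Finset.sum_eq_single k (fun j _ hjk => by rw [horthB j k hjk, mul_zero])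
        (fun h => absurd (Finset.mem_univ k) h)] at h0
      rcases mul_eq_zero.mp h0 with h | h
      · exact h
      · exact absurd h (hene k)
    apply hu0
    rw [← hrep]
    simp only [hcoef, zero_smul, Finset.sum_const_zero]
  -- three independent vectors in W
  obtain ⟨w', hw'⟩ := exists_linearIndependent_of_le_finrank (R := ℂ) (M := W) hcon
  set w : Fin 3 → (Fin 6 → ℂ) := fun i => (w' i : Fin 6 → ℂ) with hwdef
  have hw : LinearIndependent ℂ w := hw'.map' W.subtype W.ker_subtype
  have hwW : ∀ i, w i ∈ W := fun i => (w' i).2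
  set W3 : Submodule ℂ (Fin 6 → ℂ) := Submodule.span ℂ (Set.range w) with hW3
  have hW3W : W3 ≤ W := Submodule.span_le.mpr (by rintro z ⟨i, rfl⟩; exact hwW i)
  have hW3rank : finrank ℂ W3 = 3 := by
    rw [hW3, finrank_span_eq_card hw]; simp
  set MA : Matrix (Fin 3) (Fin 6) ℂ := Matrix.of (fun i => A *ᵥ w i) with hMA
  set MB : Matrix (Fin 3) (Fin 6) ℂ := Matrix.of (fun i => B *ᵥ w i) with hMB
  have hMAdot : ∀ (x : Fin 6 → ℂ) i, (MA *ᵥ x) i = w i ⬝ᵥ (A *ᵥ x) := by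
    intro x i
    show (A *ᵥ w i) ⬝ᵥ x = _
    rw [← symdot hA, dotProduct_comm]
  have hMBdot : ∀ (x : Fin 6 → ℂ) i, (MB *ᵥ x) i = w i ⬝ᵥ (B *ᵥ x) := by
    intro x i
    show (B *ᵥ w i) ⬝ᵥ x = _
    rw [← symdot hB, dotProduct_comm]
  have hAker : LinearMap.ker A.mulVecLin = ⊥ := LinearMap.ker_eq_bot.mpr hAinj
  have hBinj : Function.Injective (fun x => B *ᵥ x) := by
    have hBu : IsUnit B.det := isUnit_iff_ne_zero.mpr hdetB
    intro x y hxy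
    have := congrArg (fun z => B⁻¹ *ᵥ z) hxy
    simpa [Matrix.mulVec_mulVec, Matrix.nonsing_inv_mul B hBu] using this
  have hBker : LinearMap.ker B.mulVecLin = ⊥ := LinearMap.ker_eq_bot.mpr hBinj
  have hMAind : LinearIndependent ℂ (fun i => MA i) :=
    hw.map' A.mulVecLin hAker
  have hMBind : LinearIndependent ℂ (fun i => MB i) :=
    hw.map' B.mulVecLin hBker
  have hleA : W3 ≤ LinearMap.ker MA.mulVecLin := by
    rw [hW3, Submodule.span_le]
    rintro z ⟨j, rfl⟩
    rw [SetLike.mem_coe, LinearMap.mem_ker]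
    funext i
    rw [Matrix.mulVecLin_apply, hMAdot]
    exact hbA (w i) (hwW i) (w j) (hwW j)
  have hleB : W3 ≤ LinearMap.ker MB.mulVecLin := by
    rw [hW3, Submodule.span_le]
    rintro z ⟨j, rfl⟩
    rw [SetLike.mem_coe, LinearMap.mem_ker]
    funext i
    rw [Matrix.mulVecLin_apply, hMBdot]
    exact hbB (w i) (hwW i) (w j) (hwW j)
  have hWA : W3 = LinearMap.ker MA.mulVecLin :=
    Submodule.eq_of_le_of_finrank_eq hleA (hW3rank.trans (ker_rank_three hMAind).symm)
  have hWB : W3 = LinearMap.ker MB.mulVecLin :=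
    Submodule.eq_of_le_of_finrank_eq hleB (hW3rank.trans (ker_rank_three hMBind).symm)
  -- invariance of W3 under A⁻¹B
  have hinv : ∀ x ∈ W3, (A⁻¹ * B).mulVecLin x ∈ W3 := by
    intro x hx
    rw [hWB, LinearMap.mem_ker] at hx
    rw [hWA, LinearMap.mem_ker]
    funext i
    rw [Matrix.mulVecLin_apply, Matrix.mulVecLin_apply, hMAdot, Matrix.mulVec_mulVec,
      ← Matrix.mul_assoc, hAmulinv, Matrix.one_mul, ← hMBdot]
    calc (MB *ᵥ x) i = (MB.mulVecLin x) i := rfl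
    _ = 0 := by rw [hx]; rfl
  -- an eigenvector of A⁻¹B inside W3
  haveI : Nontrivial W3 := by
    apply Module.nontrivial_of_finrank_pos (R := ℂ)
    rw [hW3rank]; norm_num
  set f : Module.End ℂ W3 := ((A⁻¹ * B).mulVecLin).restrict hinv with hf
  obtain ⟨μ, hμ⟩ := Module.End.exists_eigenvalue f
  obtain ⟨u, hu⟩ := hμ.exists_hasEigenvector
  have hueq : (A⁻¹ * B) *ᵥ (u : Fin 6 → ℂ) = μ • (u : Fin 6 → ℂ) := by
    have h1 : f u = μ • u := Module.End.mem_eigenspace_iff.mp hu.1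
    have h2 := congrArg (Subtype.val) h1
    rw [hf, LinearMap.restrict_apply] at h2
    exact h2
  have hu0 : (u : Fin 6 → ℂ) ≠ 0 := fun h => hu.2 (Subtype.ext h)
  -- express u in the eigenbasis
  set c : Fin 6 → ℂ := fun j => bas.repr (u : Fin 6 → ℂ) j with hc
  have hrep : ∑ j, c j • v j = (u : Fin 6 → ℂ) := by
    rw [← hbas]; exact bas.sum_repr _
  have hrel : ∀ j, c j * (mu j - μ) = 0 := by
    intro j
    have h0 : ∑ i, (c i * (mu i - μ)) • v i = 0 := by
      have hl : (A⁻¹ * B) *ᵥ (u : Fin 6 → ℂ) = ∑ i, (c i * mu i) • v i := by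
        rw [← hrep, ← Matrix.mulVecLin_apply, map_sum]
        refine Finset.sum_congr rfl (fun i _ => ?_)
        rw [_root_.map_smul, Matrix.mulVecLin_apply, heig i, smul_smul]
      have hr2 : μ • (u : Fin 6 → ℂ) = ∑ i, (μ * c i) • v i := by
        rw [← hrep, Finset.smul_sum]
        refine Finset.sum_congr rfl (fun i _ => ?_)
        rw [smul_smul]
      have := hl.symm.trans (hueq.trans hr2)
      calc ∑ i, (c i * (mu i - μ)) • v i
          = ∑ i, ((c i * mu i) • v i - (μ * c i) • v i) := by
            refine Finset.sum_congr rfl (fun i _ => ?_)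
            rw [← sub_smul]; exact congrArg (· • v i) (by ring)
      _ = ∑ i, (c i * mu i) • v i - ∑ i, (μ * c i) • v i := Finset.sum_sub_distrib _ _
      _ = 0 := by rw [← this, sub_self]
    have := linearIndependent_iff'.mp hvind Finset.univ _ h0 j (Finset.mem_univ j)
    exact this
  have hcex : ∃ k, c k ≠ 0 := by
    by_contra hall
    push_neg at hall
    apply hu0
    rw [← hrep]
    simp only [hall, zero_smul, Finset.sum_const_zero]
  obtain ⟨k₀, hk₀⟩ := hcex
  have hμeq : μ = mu k₀ := by
    have := hrel k₀
    rcases mul_eq_zero.mp this with h | h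
    · exact absurd h hk₀
    · exact (sub_eq_zero.mp h).symm
  have hcj : ∀ j, j ≠ k₀ → c j = 0 := by
    intro j hj
    rcases mul_eq_zero.mp (hrel j) with h | h
    · exact h
    · exact absurd (hmuinj (show mu j = mu k₀ by rw [← hμeq]; exact sub_eq_zero.mp h)) hj
  have huval : (u : Fin 6 → ℂ) = c k₀ • v k₀ := by
    have hss : ∑ j, c j • v j = c k₀ • v k₀ :=
      Finset.sum_eq_single k₀ (fun j _ hj => by rw [hcj j hj, zero_smul])
        (fun h => absurd (Finset.mem_univ k₀) h)
    exact hrep.symm.trans hss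
  have hq0 : (u : Fin 6 → ℂ) ⬝ᵥ (A *ᵥ (u : Fin 6 → ℂ)) = 0 := hqA _ (hW3W u.2)
  rw [huval, smul_dotProduct, Matrix.mulVec_smul, dotProduct_smul,
    smul_eq_mul, smul_eq_mul] at hq0
  have : c k₀ * (c k₀ * d k₀) = 0 := hq0
  rcases mul_eq_zero.mp this with h | h
  · exact hk₀ h
  · rcases mul_eq_zero.mp h with h' | h'
    · exact hk₀ h'
    · exact hdne k₀ h'
end

section
/- Let q₁, q₂ be quadratic forms on ℂ⁶ with symmetric matrix representatives A, B, and assume the pencil is generic in the sense that the polynomial λ ↦ det(A + λB) has degree 6 and six distinct complex roots, and det A ≠ 0. Then for every nonzero vector x ∈ ℂ⁶ with q₁(x) = 0 and q₂(x) = 0 there exists a 2-dimensional linear subspace W ⊆ ℂ⁶ containing x on which both q₁ and q₂ vanish identically. Equivalently, through every point of the smooth intersection X of the two quadrics in ℂP⁵ there passes a line contained in X. -/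
open Polynomial Matrix

section Aux

open Module Submodule

/-- A binary quadratic form over `ℂ` has a nontrivial zero. -/
private lemma exists_root_quad (c0 c1 c2 : ℂ) :
    ∃ s t : ℂ, ¬(s = 0 ∧ t = 0) ∧ c0 * s ^ 2 + c1 * s * t + c2 * t ^ 2 = 0 := by
  by_cases h : c1 = 0 ∧ c2 = 0
  · exact ⟨0, 1, fun hc => one_ne_zero hc.2, by simp [h.1, h.2]⟩
  · set p : ℂ[X] := C c0 + C c1 * X + C c2 * X ^ 2 with hp
    have e1 : p.coeff 1 = c1 := by simp [hp, coeff_one, coeff_X]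
    have e2 : p.coeff 2 = c2 := by simp [hp, coeff_one, coeff_X]
    have hdeg : p.degree ≠ 0 := by
      intro hd
      have hnd : p.natDegree = 0 := natDegree_eq_zero_iff_degree_le_zero.mpr hd.le
      have hz : ∀ k : ℕ, 1 ≤ k → p.coeff k = 0 := fun k hk =>
        coeff_eq_zero_of_natDegree_lt (by omega)
      exact h ⟨e1 ▸ hz 1 le_rfl, e2 ▸ hz 2 (by norm_num)⟩
    obtain ⟨z, hz⟩ := Complex.isAlgClosed.exists_root p hdeg
    refine ⟨1, z, fun hc => one_ne_zero hc.1, ?_⟩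
    have : p.eval z = 0 := hz
    simp [hp] at this
    linear_combination this

/-- A binary quartic form over `ℂ` has a nontrivial zero. -/
private lemma exists_root_quartic (c0 c1 c2 c3 c4 : ℂ) :
    ∃ s t : ℂ, ¬(s = 0 ∧ t = 0) ∧
      c0 * s ^ 4 + c1 * s ^ 3 * t + c2 * s ^ 2 * t ^ 2 + c3 * s * t ^ 3 + c4 * t ^ 4 = 0 := by
  by_cases h : c1 = 0 ∧ c2 = 0 ∧ c3 = 0 ∧ c4 = 0
  · exact ⟨0, 1, fun hc => one_ne_zero hc.2, by simp [h.1, h.2.1, h.2.2.1, h.2.2.2]⟩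
  · set p : ℂ[X] := C c0 + C c1 * X + C c2 * X ^ 2 + C c3 * X ^ 3 + C c4 * X ^ 4 with hp
    have e1 : p.coeff 1 = c1 := by simp [hp, coeff_one, coeff_X]
    have e2 : p.coeff 2 = c2 := by simp [hp, coeff_one, coeff_X]
    have e3 : p.coeff 3 = c3 := by simp [hp, coeff_one, coeff_X]
    have e4 : p.coeff 4 = c4 := by simp [hp, coeff_one, coeff_X]
    have hdeg : p.degree ≠ 0 := by
      intro hd
      have hnd : p.natDegree = 0 := natDegree_eq_zero_iff_degree_le_zero.mpr hd.le
      have hz : ∀ k : ℕ, 1 ≤ k → p.coeff k = 0 := fun k hk =>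
        coeff_eq_zero_of_natDegree_lt (by omega)
      exact h ⟨e1 ▸ hz 1 le_rfl, e2 ▸ hz 2 (by norm_num), e3 ▸ hz 3 (by norm_num),
        e4 ▸ hz 4 (by norm_num)⟩
    obtain ⟨z, hz⟩ := Complex.isAlgClosed.exists_root p hdeg
    refine ⟨1, z, fun hc => one_ne_zero hc.1, ?_⟩
    have : p.eval z = 0 := hz
    simp [hp] at this
    linear_combination this

private lemma symm_dot {M : Matrix (Fin 6) (Fin 6) ℂ} (hM : M.IsSymm) (u v : Fin 6 → ℂ) :
    u ⬝ᵥ M *ᵥ v = v ⬝ᵥ M *ᵥ u := by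
  have h1 : u ᵥ* M = M *ᵥ u := by
    conv_lhs => rw [← hM]
    rw [vecMul_transpose]
  rw [dotProduct_mulVec, h1, dotProduct_comm]

private lemma expand2 {M : Matrix (Fin 6) (Fin 6) ℂ} (hM : M.IsSymm) (c0 c1 : ℂ)
    (v0 v1 : Fin 6 → ℂ) :
    (c0 • v0 + c1 • v1) ⬝ᵥ M *ᵥ (c0 • v0 + c1 • v1)
      = c0 ^ 2 * (v0 ⬝ᵥ M *ᵥ v0) + 2 * c0 * c1 * (v0 ⬝ᵥ M *ᵥ v1)
        + c1 ^ 2 * (v1 ⬝ᵥ M *ᵥ v1) := by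
  simp only [mulVec_add, mulVec_smul, dotProduct_add, add_dotProduct, smul_dotProduct,
    dotProduct_smul, smul_eq_mul, symm_dot hM v1 v0]
  ring

private lemma expand3 {M : Matrix (Fin 6) (Fin 6) ℂ} (hM : M.IsSymm) (c0 c1 c2 : ℂ)
    (v0 v1 v2 : Fin 6 → ℂ) :
    (c0 • v0 + c1 • v1 + c2 • v2) ⬝ᵥ M *ᵥ (c0 • v0 + c1 • v1 + c2 • v2)
      = c0 ^ 2 * (v0 ⬝ᵥ M *ᵥ v0) + c1 ^ 2 * (v1 ⬝ᵥ M *ᵥ v1) + c2 ^ 2 * (v2 ⬝ᵥ M *ᵥ v2)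
        + 2 * c0 * c1 * (v0 ⬝ᵥ M *ᵥ v1) + 2 * c0 * c2 * (v0 ⬝ᵥ M *ᵥ v2)
        + 2 * c1 * c2 * (v1 ⬝ᵥ M *ᵥ v2) := by
  simp only [mulVec_add, mulVec_smul, dotProduct_add, add_dotProduct, smul_dotProduct,
    dotProduct_smul, smul_eq_mul, symm_dot hM v1 v0, symm_dot hM v2 v0, symm_dot hM v2 v1]
  ring

/-- The core geometric step: given `e, u₁, u₂` linearly independent with `e` isotropic
for `A`, there is a nonzero vector in their span isotropic for both `A` and `B`. -/
private lemma core {A B : Matrix (Fin 6) (Fin 6) ℂ} (hA : A.IsSymm) (hB : B.IsSymm)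
    (S : Submodule ℂ (Fin 6 → ℂ)) (e u₁ u₂ : Fin 6 → ℂ)
    (heS : e ∈ S) (h1S : u₁ ∈ S) (h2S : u₂ ∈ S)
    (hqe : e ⬝ᵥ A *ᵥ e = 0)
    (hind : ∀ a b c : ℂ, a • e + b • u₁ + c • u₂ = 0 → a = 0 ∧ b = 0 ∧ c = 0) :
    ∃ v : Fin 6 → ℂ, v ≠ 0 ∧ v ∈ S ∧ v ⬝ᵥ A *ᵥ v = 0 ∧ v ⬝ᵥ B *ᵥ v = 0 := by
  set a := u₁ ⬝ᵥ A *ᵥ u₁ with ha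
  set hh := u₁ ⬝ᵥ A *ᵥ u₂ with hhh
  set cc := u₂ ⬝ᵥ A *ᵥ u₂ with hcc
  set p := e ⬝ᵥ A *ᵥ u₁ with hp
  set q := e ⬝ᵥ A *ᵥ u₂ with hq
  set r0 := e ⬝ᵥ B *ᵥ e with hr0
  set r1 := e ⬝ᵥ B *ᵥ u₁ with hr1
  set r2 := e ⬝ᵥ B *ᵥ u₂ with hr2
  set b11 := u₁ ⬝ᵥ B *ᵥ u₁ with hb11
  set b12 := u₁ ⬝ᵥ B *ᵥ u₂ with hb12
  set b22 := u₂ ⬝ᵥ B *ᵥ u₂ with hb22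
  obtain ⟨s, t, hst, hroot⟩ := exists_root_quartic
    (a * a * r0 - 4 * a * p * r1 + 4 * p * p * b11)
    (4 * a * hh * r0 - 4 * (a * q + 2 * hh * p) * r1 - 4 * a * p * r2
      + 8 * p * q * b11 + 8 * p * p * b12)
    ((2 * a * cc + 4 * hh * hh) * r0 - 4 * (2 * hh * q + cc * p) * r1
      - 4 * (a * q + 2 * hh * p) * r2 + 4 * q * q * b11 + 16 * p * q * b12 + 4 * p * p * b22)
    (4 * hh * cc * r0 - 4 * cc * q * r1 - 4 * (2 * hh * q + cc * p) * r2
      + 8 * q * q * b12 + 8 * p * q * b22)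
    (cc * cc * r0 - 4 * cc * q * r2 + 4 * q * q * b22)
  set α := a * s ^ 2 + 2 * hh * s * t + cc * t ^ 2 with hα
  set β := 2 * (p * s + q * t) with hβ
  set w := α • e + (-(β * s)) • u₁ + (-(β * t)) • u₂ with hw
  have hwS : w ∈ S := by
    exact S.add_mem (S.add_mem (S.smul_mem _ heS) (S.smul_mem _ h1S)) (S.smul_mem _ h2S)
  have hwA : w ⬝ᵥ A *ᵥ w = 0 := by
    rw [hw, expand3 hA, hqe, hα, hβ]
    ring
  have hwB : w ⬝ᵥ B *ᵥ w = 0 := by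
    rw [hw, expand3 hB, hα, hβ]
    linear_combination hroot
  by_cases hw0 : w = 0
  · -- degenerate case: the plane spanned by `e` and `u := s•u₁+t•u₂` is totally
    -- isotropic for `A`.
    obtain ⟨hα0, hβs, hβt⟩ := hind _ _ _ (hw ▸ hw0)
    have hβ0 : β = 0 := by
      rcases not_and_or.mp hst with hs | ht
      · exact (mul_eq_zero.mp (neg_eq_zero.mp hβs)).resolve_right hs
      · exact (mul_eq_zero.mp (neg_eq_zero.mp hβt)).resolve_right ht
    set u := s • u₁ + t • u₂ with hu
    have hqu : u ⬝ᵥ A *ᵥ u = 0 := by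
      rw [hu, expand2 hA, ← ha, ← hhh, ← hcc]
      rw [hα] at hα0
      linear_combination hα0
    have hbu : e ⬝ᵥ A *ᵥ u = 0 := by
      rw [hu]
      simp only [mulVec_add, mulVec_smul, dotProduct_add, dotProduct_smul, smul_eq_mul,
        ← hp, ← hq]
      rw [hβ] at hβ0
      linear_combination hβ0 / 2
    obtain ⟨c, d, hcd, hcroot⟩ := exists_root_quad (e ⬝ᵥ B *ᵥ e) (2 * (e ⬝ᵥ B *ᵥ u))
      (u ⬝ᵥ B *ᵥ u)
    refine ⟨c • e + d • u, ?_, ?_, ?_, ?_⟩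
    · intro hv
      have : c • e + (d * s) • u₁ + (d * t) • u₂ = 0 := by
        rw [← hv, hu]
        simp only [smul_add, smul_smul]
        abel
      obtain ⟨hc, hds, hdt⟩ := hind _ _ _ this
      have hd : d = 0 := by
        rcases not_and_or.mp hst with hs | ht
        · exact (mul_eq_zero.mp hds).resolve_right hs
        · exact (mul_eq_zero.mp hdt).resolve_right ht
      exact hcd ⟨hc, hd⟩
    · exact S.add_mem (S.smul_mem _ heS)
        (S.smul_mem _ (S.add_mem (S.smul_mem _ h1S) (S.smul_mem _ h2S)))
    · rw [expand2 hA, hqe, hqu, hbu]; ring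
    · rw [expand2 hB]; linear_combination hcroot
  · exact ⟨w, hw0, hwS, hwA, hwB⟩

/-- Any two symmetric quadrics on `ℂ⁶` have a common nonzero isotropic vector inside the
span of any three linearly independent vectors. -/
private lemma key {A B : Matrix (Fin 6) (Fin 6) ℂ} (hA : A.IsSymm) (hB : B.IsSymm)
    (y : Fin 3 → (Fin 6 → ℂ)) (hy : LinearIndependent ℂ y) :
    ∃ v : Fin 6 → ℂ, v ≠ 0 ∧ v ∈ Submodule.span ℂ (Set.range y) ∧
      v ⬝ᵥ A *ᵥ v = 0 ∧ v ⬝ᵥ B *ᵥ v = 0 := by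
  have hind : ∀ a b c : ℂ, a • y 0 + b • y 1 + c • y 2 = 0 → a = 0 ∧ b = 0 ∧ c = 0 := by
    intro a b c h
    have := Fintype.linearIndependent_iff.mp hy ![a, b, c]
      (by simpa [Fin.sum_univ_three] using h)
    exact ⟨this 0, this 1, this 2⟩
  have hmem : ∀ j, y j ∈ Submodule.span ℂ (Set.range y) := fun j =>
    Submodule.subset_span (Set.mem_range_self j)
  obtain ⟨s0, t0, hst0, he0⟩ := exists_root_quad (y 0 ⬝ᵥ A *ᵥ y 0)
    (2 * (y 0 ⬝ᵥ A *ᵥ y 1)) (y 1 ⬝ᵥ A *ᵥ y 1)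
  set e := s0 • y 0 + t0 • y 1 with he
  have heS : e ∈ Submodule.span ℂ (Set.range y) :=
    Submodule.add_mem _ (Submodule.smul_mem _ _ (hmem 0)) (Submodule.smul_mem _ _ (hmem 1))
  have hqe : e ⬝ᵥ A *ᵥ e = 0 := by
    rw [he, expand2 hA]
    linear_combination he0
  by_cases hs0 : s0 = 0
  · have ht0 : t0 ≠ 0 := fun h => hst0 ⟨hs0, h⟩
    refine core hA hB _ e (y 0) (y 2) heS (hmem 0) (hmem 2) hqe ?_
    intro a b c h
    have : b • y 0 + (a * t0) • y 1 + c • y 2 = 0 := by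
      rw [← h, he, hs0]
      simp only [smul_add, smul_smul, zero_smul, add_zero, zero_add]
      abel
    obtain ⟨hb, hat, hc⟩ := hind _ _ _ this
    exact ⟨(mul_eq_zero.mp hat).resolve_right ht0, hb, hc⟩
  · refine core hA hB _ e (y 1) (y 2) heS (hmem 1) (hmem 2) hqe ?_
    intro a b c h
    have : (a * s0) • y 0 + (a * t0 + b) • y 1 + c • y 2 = 0 := by
      rw [← h, he]
      simp only [smul_add, smul_smul, add_smul]
      abel
    obtain ⟨has, hatb, hc⟩ := hind _ _ _ this
    have ha : a = 0 := (mul_eq_zero.mp has).resolve_right hs0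
    refine ⟨ha, ?_, hc⟩
    simpa [ha] using hatb

end Aux

/-- For a generic pencil of quadrics on `ℂ⁶` (the polynomial `λ ↦ det(A + λB)` has degree
6 with six distinct roots, and `det A ≠ 0`), through every nonzero common isotropic vector
there passes a 2-dimensional common totally isotropic subspace. Equivalently, through
every point of the smooth intersection of the two quadrics in `ℂP⁵` there passes a line
contained in it. -/
theorem generic_pencil_line_through_every_point
    (A B : Matrix (Fin 6) (Fin 6) ℂ) (hA : A.IsSymm) (hB : B.IsSymm)
    (q₁ q₂ : (Fin 6 → ℂ) → ℂ)
    (hq₁ : ∀ x, q₁ x = x ⬝ᵥ (A *ᵥ x))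
    (hq₂ : ∀ x, q₂ x = x ⬝ᵥ (B *ᵥ x))
    (hdeg : (Matrix.det (A.map (C : ℂ → ℂ[X]) + (X : ℂ[X]) • B.map (C : ℂ → ℂ[X]))).degree = 6)
    (hroots : (Matrix.det (A.map (C : ℂ → ℂ[X]) + (X : ℂ[X]) • B.map (C : ℂ → ℂ[X]))).roots.toFinset.card = 6)
    (hdetA : A.det ≠ 0) :
    ∀ x : Fin 6 → ℂ, x ≠ 0 → q₁ x = 0 → q₂ x = 0 →
      ∃ W : Submodule ℂ (Fin 6 → ℂ), x ∈ W ∧ Module.finrank ℂ W = 2 ∧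
        ∀ y ∈ W, q₁ y = 0 ∧ q₂ y = 0 := by
  intro x hx hx1 hx2
  have hx1' : x ⬝ᵥ A *ᵥ x = 0 := by rw [← hq₁]; exact hx1
  have hx2' : x ⬝ᵥ B *ᵥ x = 0 := by rw [← hq₂]; exact hx2
  obtain ⟨i, hxi⟩ : ∃ i, x i ≠ 0 := by
    by_contra h
    push_neg at h
    exact hx (funext fun j => h j)
  -- the linear map whose kernel is `x^⊥ ∩ x^⊥' ∩ {y i = 0}`
  set L : (Fin 6 → ℂ) →ₗ[ℂ] (Fin 3 → ℂ) :=
    { toFun := fun y => ![x ⬝ᵥ A *ᵥ y, x ⬝ᵥ B *ᵥ y, y i]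
      map_add' := by
        intro u v
        funext j
        fin_cases j <;>
          simp [mulVec_add, dotProduct_add]
      map_smul' := by
        intro c v
        funext j
        fin_cases j <;>
          simp [mulVec_smul, dotProduct_smul] } with hL
  have hFrank : 3 ≤ Module.finrank ℂ (LinearMap.ker L) := by
    have h1 := L.finrank_range_add_finrank_ker
    have h2 : Module.finrank ℂ (LinearMap.range L) ≤ 3 := by
      have := Submodule.finrank_le (LinearMap.range L)
      simpa using this
    have h3 : Module.finrank ℂ (Fin 6 → ℂ) = 6 := by simp
    omega
  obtain ⟨f, hf⟩ := exists_linearIndependent_of_le_finrank hFrank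
  set y : Fin 3 → (Fin 6 → ℂ) := fun j => (f j : Fin 6 → ℂ) with hy
  have hyli : LinearIndependent ℂ y :=
    hf.map' (LinearMap.ker L).subtype (Submodule.ker_subtype _)
  obtain ⟨v, hv0, hvspan, hvA, hvB⟩ := key hA hB y hyli
  have hvF : v ∈ LinearMap.ker L := by
    refine Submodule.span_le.mpr ?_ hvspan
    rintro _ ⟨j, rfl⟩
    exact (f j).2
  have hLv : L v = 0 := hvF
  have hAxv : x ⬝ᵥ A *ᵥ v = 0 := by
    have := congrFun hLv 0
    simpa [hL] using this
  have hBxv : x ⬝ᵥ B *ᵥ v = 0 := by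
    have := congrFun hLv 1
    simpa [hL] using this
  have hvi : v i = 0 := by
    have := congrFun hLv 2
    simpa [hL] using this
  have hli : LinearIndependent ℂ ![x, v] := by
    rw [LinearIndependent.pair_iff]
    intro s t hstv
    have h0 : s * x i + t * v i = 0 := by
      have := congrFun hstv i
      simpa using this
    have hs : s = 0 := by
      rw [hvi, mul_zero, add_zero] at h0
      exact (mul_eq_zero.mp h0).resolve_right hxi
    refine ⟨hs, ?_⟩
    rw [hs, zero_smul, zero_add] at hstv
    exact (smul_eq_zero.mp hstv).resolve_right hv0
  refine ⟨Submodule.span ℂ (Set.range ![x, v]), ?_, ?_, ?_⟩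
  · exact Submodule.subset_span ⟨0, rfl⟩
  · rw [finrank_span_eq_card hli]
    simp
  · intro z hz
    obtain ⟨c, hc⟩ := (Submodule.mem_span_range_iff_exists_fun ℂ).mp hz
    have hz' : z = c 0 • x + c 1 • v := by
      rw [← hc, Fin.sum_univ_two]
      simp
    constructor
    · rw [hq₁, hz', expand2 hA, hx1', hvA, hAxv]; ring
    · rw [hq₂, hz', expand2 hB, hx2', hvB, hBxv]; ring
end
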